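/- In the SFBF setup, fix x* ∈ 𝒳_* and set σ̂(x*) = max{σ(x*), σ₀}, a(x*) = σ̂(x*)² ᾱ² C₂² c₁, where ᾱ = sup_n α_n and c₁ > 1 is a constant such that κ_n ≤ ᾱ² C₂² c₁ (1 + ᾱ² σ₀² C₂² / m_{n+1}) for all n (κ_n as in the stochastic quasi-Fejér inequality). Choose n₀ ∈ ℕ and γ > 0 such that Σ_{n ≥ n₀} 1/m_{n+1} ≤ γ and β(x*) := γ·a(x*) + γ²·a(x*)² ∈ (0,1). Then sup_{n ≥ n₀+1} E[‖X_n − x*‖²] ≤ (E[‖X_{n₀} − x*‖²] + 1)/(1 − β(x*)). -/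

import Mathlib

open MeasureTheory
open scoped RealInnerProductSpace

set_option maxHeartbeats 1000000 in
/-- Boundedness of the second moments of the SFBF iterates (Proposition 5.1):
`sup_{n ≥ n₀+1} E[‖X_n − x*‖²] ≤ (E[‖X_{n₀} − x*‖²] + 1)/(1 − β(x*))`. -/
theorem stmt_14 {d : ℕ} {Ω : Type*} [mΩ : MeasurableSpace Ω]
    (μ : Measure Ω) [IsProbabilityMeasure μ]
    (𝒳 : Set (EuclideanSpace ℝ (Fin d)))
    (h𝒳ne : 𝒳.Nonempty) (h𝒳cl : IsClosed 𝒳) (h𝒳cv : Convex ℝ 𝒳)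
    (proj : EuclideanSpace ℝ (Fin d) → EuclideanSpace ℝ (Fin d))
    (hproj_mem : ∀ x, proj x ∈ 𝒳)
    (hproj_char : ∀ x, ∀ y ∈ 𝒳, ⟪x - proj x, y - proj x⟫ ≤ 0)
    (T : EuclideanSpace ℝ (Fin d) → EuclideanSpace ℝ (Fin d))
    (L : ℝ) (hL : 0 < L)
    (hLip : ∀ x y, ‖T x - T y‖ ≤ L * ‖x - y‖)
    (hpm : ∀ x y, 0 ≤ ⟪T x, y - x⟫ → 0 ≤ ⟪T y, y - x⟫)
    (xs : EuclideanSpace ℝ (Fin d)) (hxs_mem : xs ∈ 𝒳)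
    (hxs_sol : ∀ y ∈ 𝒳, 0 ≤ ⟪T xs, y - xs⟫)
    -- step sizes and batch sizes
    (α : ℕ → ℝ) (αlow αup : ℝ) (hαlow : 0 < αlow) (hαup : Real.sqrt 2 * L * αup < 1)
    (hα : ∀ n, αlow ≤ α n ∧ α n ≤ αup)
    (mb : ℕ → ℕ) (hmb : ∀ n, 1 ≤ mb n)
    (hmb_sum : Summable fun n => ((mb n : ℝ))⁻¹)
    -- filtration and adapted iterates
    (𝓕 : ℕ → MeasurableSpace Ω) (h𝓕mono : ∀ n, 𝓕 n ≤ 𝓕 (n + 1)) (h𝓕Ω : ∀ n, 𝓕 n ≤ mΩ)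
    (X : ℕ → Ω → EuclideanSpace ℝ (Fin d))
    (hXad : ∀ n, StronglyMeasurable[𝓕 n] (X n))
    (hXint : ∀ n, Integrable (fun ω => ‖X n ω - xs‖ ^ 2) μ)
    (hrint : ∀ n, Integrable
      (fun ω => ‖X n ω - proj (X n ω - α n • T (X n ω))‖ ^ 2) μ)
    -- the variance parameters and the stochastic quasi-Fejér inequality
    (σs σ₀ C₂ c₁ : ℝ) (hσs : 0 ≤ σs) (hσ₀ : 0 ≤ σ₀) (hC₂ : 0 < C₂) (hc₁ : 1 < c₁)
    (κ : ℕ → ℝ) (hκ0 : ∀ n, 0 ≤ κ n)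
    (hFejer : ∀ n, ∀ᵐ ω ∂μ,
      condExp (𝓕 n) μ (fun ω' => ‖X (n + 1) ω' - xs‖ ^ 2) ω
        ≤ ‖X n ω - xs‖ ^ 2
          - ((1 - 2 * L ^ 2 * (α n) ^ 2) / 2) *
              ‖X n ω - proj (X n ω - α n • T (X n ω))‖ ^ 2
          + (κ n / (mb (n + 1))) * (σ₀ ^ 2 * ‖X n ω - xs‖ ^ 2 + σs ^ 2))
    (hκ : ∀ n, κ n ≤ αup ^ 2 * C₂ ^ 2 * c₁ * (1 + αup ^ 2 * σ₀ ^ 2 * C₂ ^ 2 / (mb (n + 1))))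
    -- the constants `a(x*)`, `γ`, `n₀` and `β(x*)`
    (a γ β : ℝ) (n₀ : ℕ)
    (ha : a = (max σs σ₀) ^ 2 * αup ^ 2 * C₂ ^ 2 * c₁)
    (hγ : 0 < γ)
    (hn₀ : ∑' i : ℕ, ((mb (n₀ + i + 1) : ℝ))⁻¹ ≤ γ)
    (hβ : β = γ * a + γ ^ 2 * a ^ 2)
    (hβ01 : 0 < β ∧ β < 1) :
    ∀ n, n₀ + 1 ≤ n →
      ∫ ω, ‖X n ω - xs‖ ^ 2 ∂μ ≤ ((∫ ω, ‖X n₀ ω - xs‖ ^ 2 ∂μ) + 1) / (1 - β) := by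

  classical
  intro N hN
  set e : ℕ → ℝ := fun n => ∫ ω, ‖X n ω - xs‖ ^ 2 ∂μ with he_def
  have he0 : ∀ n, 0 ≤ e n := fun n => integral_nonneg (fun ω => by positivity)
  -- nonnegativity of ρ_n
  have hαup0 : 0 < αup := lt_of_lt_of_le hαlow (le_trans (hα 0).1 (hα 0).2)
  have hsq2 : Real.sqrt 2 ^ 2 = 2 := Real.sq_sqrt (by norm_num)
  have hρ : ∀ n, 0 ≤ (1 - 2 * L ^ 2 * (α n) ^ 2) / 2 := by
    intro n
    have h1 : 0 < α n := lt_of_lt_of_le hαlow (hα n).1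
    have h2 : α n ≤ αup := (hα n).2
    have h3 : Real.sqrt 2 * L * αup < 1 := hαup
    have hx : (0:ℝ) < Real.sqrt 2 * L * αup := by positivity
    have h5 : 2 * L ^ 2 * αup ^ 2 < 1 := by
      nlinarith [mul_pos hx (show (0:ℝ) < 1 - Real.sqrt 2 * L * αup by linarith), hsq2]
    have h6 : α n ^ 2 ≤ αup ^ 2 := pow_le_pow_left₀ h1.le h2 2
    have h7 : L ^ 2 * α n ^ 2 ≤ L ^ 2 * αup ^ 2 :=
      mul_le_mul_of_nonneg_left h6 (sq_nonneg L)
    linarith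
  -- one-step expectation inequality
  have hstep : ∀ n, e (n + 1) ≤ e n + (κ n / (mb (n + 1))) * (σ₀ ^ 2 * e n + σs ^ 2) := by
    intro n
    set ρ : ℝ := (1 - 2 * L ^ 2 * (α n) ^ 2) / 2 with hρdef
    set r : Ω → ℝ := fun ω => ‖X n ω - proj (X n ω - α n • T (X n ω))‖ ^ 2 with hr_def
    have hrint' : Integrable r μ := hrint n
    have hrnn : 0 ≤ ∫ ω, r ω ∂μ := integral_nonneg (fun ω => by positivity)
    have hint2 : Integrable (fun ω => σ₀ ^ 2 * ‖X n ω - xs‖ ^ 2 + σs ^ 2) μ :=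
      ((hXint n).const_mul _).add (integrable_const _)
    have hf3 : Integrable (fun ω => ρ * r ω) μ := hrint'.const_mul ρ
    have hf1 : Integrable (fun ω => ‖X n ω - xs‖ ^ 2 - ρ * r ω) μ := (hXint n).sub hf3
    have hf2 : Integrable
        (fun ω => (κ n / (mb (n + 1))) * (σ₀ ^ 2 * ‖X n ω - xs‖ ^ 2 + σs ^ 2)) μ :=
      hint2.const_mul _
    have hf4 : Integrable (fun ω => σ₀ ^ 2 * ‖X n ω - xs‖ ^ 2) μ := (hXint n).const_mul _
    have hintR : Integrable (fun ω => ‖X n ω - xs‖ ^ 2 - ρ * r ω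
        + (κ n / (mb (n + 1))) * (σ₀ ^ 2 * ‖X n ω - xs‖ ^ 2 + σs ^ 2)) μ :=
      hf1.add hf2
    have hcond : ∫ ω, condExp (𝓕 n) μ (fun ω' => ‖X (n + 1) ω' - xs‖ ^ 2) ω ∂μ
        = ∫ ω, ‖X (n + 1) ω - xs‖ ^ 2 ∂μ := integral_condExp (μ := μ) (h𝓕Ω n)
    have hmono : ∫ ω, condExp (𝓕 n) μ (fun ω' => ‖X (n + 1) ω' - xs‖ ^ 2) ω ∂μ
        ≤ ∫ ω, (‖X n ω - xs‖ ^ 2 - ρ * r ω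
          + (κ n / (mb (n + 1))) * (σ₀ ^ 2 * ‖X n ω - xs‖ ^ 2 + σs ^ 2)) ∂μ :=
      integral_mono_ae integrable_condExp hintR (hFejer n)
    have hR : ∫ ω, (‖X n ω - xs‖ ^ 2 - ρ * r ω
          + (κ n / (mb (n + 1))) * (σ₀ ^ 2 * ‖X n ω - xs‖ ^ 2 + σs ^ 2)) ∂μ
        = e n - ρ * (∫ ω, r ω ∂μ)
          + (κ n / (mb (n + 1))) * (σ₀ ^ 2 * e n + σs ^ 2) := by
      rw [integral_add hf1 hf2, integral_sub (hXint n) hf3, integral_const_mul,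
        integral_const_mul, integral_add hf4 (integrable_const _),
        integral_const_mul, integral_const]
      simp [he_def]
    have h1 : e (n + 1)
        = ∫ ω, condExp (𝓕 n) μ (fun ω' => ‖X (n + 1) ω' - xs‖ ^ 2) ω ∂μ := hcond.symm
    have h2 : 0 ≤ ρ * ∫ ω, r ω ∂μ := mul_nonneg (hρ n) hrnn
    rw [h1]
    calc _ ≤ e n - ρ * (∫ ω, r ω ∂μ)
          + (κ n / (mb (n + 1))) * (σ₀ ^ 2 * e n + σs ^ 2) := by rw [← hR]; exact hmono
      _ ≤ e n + (κ n / (mb (n + 1))) * (σ₀ ^ 2 * e n + σs ^ 2) := by linarith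
  -- constants
  set s : ℝ := max σs σ₀ with hs_def
  have hs0 : 0 ≤ s := le_trans hσs (le_max_left _ _)
  have ha0 : 0 ≤ a := by rw [ha]; positivity
  set c : ℕ → ℝ := fun n => a * ((mb (n + 1) : ℝ))⁻¹ * (1 + a * ((mb (n + 1) : ℝ))⁻¹)
    with hc_def
  have hmbpos : ∀ n, (0:ℝ) < (mb n : ℝ) := fun n => by
    exact_mod_cast Nat.lt_of_lt_of_le Nat.zero_lt_one (hmb n)
  have hc0 : ∀ n, 0 ≤ c n := by
    intro n
    simp only [hc_def]
    have h1 : (0:ℝ) ≤ ((mb (n + 1) : ℝ))⁻¹ := inv_nonneg.2 (hmbpos (n+1)).le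
    have h2 : 0 ≤ a * ((mb (n + 1) : ℝ))⁻¹ := mul_nonneg ha0 h1
    nlinarith
  -- key per-step bound by c n
  have hkey : ∀ n, (κ n / (mb (n + 1))) * (σ₀ ^ 2 * e n + σs ^ 2) ≤ c n * (e n + 1) := by
    intro n
    set q : ℝ := ((mb (n + 1) : ℝ))⁻¹ with hq_def
    have hq0 : 0 < q := inv_pos.2 (hmbpos (n+1))
    have hq1 : q ≤ 1 := by
      rw [hq_def]
      rw [inv_le_one_iff₀]
      right
      exact_mod_cast hmb (n+1)
    have hκn := hκ n
    have hdiv : κ n / (mb (n + 1) : ℝ) = κ n * q := by rw [hq_def, div_eq_mul_inv]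
    have hdiv2 : αup ^ 2 * σ₀ ^ 2 * C₂ ^ 2 / (mb (n + 1) : ℝ)
        = αup ^ 2 * σ₀ ^ 2 * C₂ ^ 2 * q := by rw [hq_def, div_eq_mul_inv]
    rw [hdiv]
    rw [hdiv2] at hκn
    -- abbreviations
    have hσ₀s : σ₀ ^ 2 ≤ s ^ 2 := by
      have : σ₀ ≤ s := le_max_right _ _
      nlinarith
    have hσss : σs ^ 2 ≤ s ^ 2 := by
      have : σs ≤ s := le_max_left _ _
      nlinarith
    have hBa : αup ^ 2 * σ₀ ^ 2 * C₂ ^ 2 ≤ a := by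
      rw [ha]
      nlinarith [mul_le_mul_of_nonneg_right hσ₀s (mul_nonneg (sq_nonneg αup) (sq_nonneg C₂)),
        mul_nonneg (mul_nonneg (sq_nonneg s) (mul_nonneg (sq_nonneg αup) (sq_nonneg C₂)))
          (by linarith : (0:ℝ) ≤ c₁ - 1)]
    have hen := he0 n
    have hκ0n := hκ0 n
    -- step 1 : κ q (σ₀² e + σs²) ≤ κ q s² (e+1)
    have st1 : κ n * q * (σ₀ ^ 2 * e n + σs ^ 2) ≤ κ n * q * (s ^ 2 * (e n + 1)) := by
      apply mul_le_mul_of_nonneg_left _ (mul_nonneg hκ0n hq0.le)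
      nlinarith
    -- step 2 : κ s² ≤ a (1 + a q)
    have st2 : κ n * s ^ 2 ≤ a * (1 + a * q) := by
      have h1 : κ n * s ^ 2 ≤ αup ^ 2 * C₂ ^ 2 * c₁ * (1 + αup ^ 2 * σ₀ ^ 2 * C₂ ^ 2 * q)
          * s ^ 2 := by
        apply mul_le_mul_of_nonneg_right hκn (sq_nonneg s)
      have h2 : αup ^ 2 * C₂ ^ 2 * c₁ * (1 + αup ^ 2 * σ₀ ^ 2 * C₂ ^ 2 * q) * s ^ 2
          = a * (1 + αup ^ 2 * σ₀ ^ 2 * C₂ ^ 2 * q) := by rw [ha]; ring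
      have h3 : a * (1 + αup ^ 2 * σ₀ ^ 2 * C₂ ^ 2 * q) ≤ a * (1 + a * q) := by
        apply mul_le_mul_of_nonneg_left _ ha0
        nlinarith
      linarith
    calc κ n * q * (σ₀ ^ 2 * e n + σs ^ 2) ≤ κ n * q * (s ^ 2 * (e n + 1)) := st1
      _ = (κ n * s ^ 2) * (q * (e n + 1)) := by ring
      _ ≤ (a * (1 + a * q)) * (q * (e n + 1)) := by
          apply mul_le_mul_of_nonneg_right st2
          positivity
      _ = c n * (e n + 1) := by rw [hc_def, hq_def]; ring
  -- recursion for u n := e n + 1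
  have hu : ∀ n, e (n + 1) + 1 ≤ (1 + c n) * (e n + 1) := by
    intro n
    have := le_trans (hstep n) (by linarith [hkey n] : e n + (κ n / (mb (n + 1))) *
      (σ₀ ^ 2 * e n + σs ^ 2) ≤ e n + c n * (e n + 1))
    nlinarith
  -- partial sums of c are ≤ β
  have hf_sum : Summable (fun i : ℕ => ((mb (n₀ + i + 1) : ℝ))⁻¹) := by
    have : (fun i : ℕ => ((mb (n₀ + i + 1) : ℝ))⁻¹)
        = (fun n => ((mb n : ℝ))⁻¹) ∘ (fun i => n₀ + i + 1) := rfl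
    rw [this]
    exact hmb_sum.comp_injective (fun i j h => by omega)
  have hP : ∀ n, ∑ k ∈ Finset.Ico n₀ n, ((mb (k + 1) : ℝ))⁻¹ ≤ γ := by
    intro n
    have h1 : ∑ k ∈ Finset.Ico n₀ n, ((mb (k + 1) : ℝ))⁻¹
        = ∑ i ∈ Finset.range (n - n₀), ((mb (n₀ + i + 1) : ℝ))⁻¹ := by
      rw [Finset.sum_Ico_eq_sum_range]
    rw [h1]
    exact le_trans (Summable.sum_le_tsum _ (fun i _ => by positivity) hf_sum) hn₀
  have hPnn : ∀ n, 0 ≤ ∑ k ∈ Finset.Ico n₀ n, ((mb (k + 1) : ℝ))⁻¹ :=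
    fun n => Finset.sum_nonneg (fun k _ => by positivity)
  have hS : ∀ n, ∑ k ∈ Finset.Ico n₀ n, c k ≤ β := by
    intro n
    have hsplit : ∑ k ∈ Finset.Ico n₀ n, c k
        = a * (∑ k ∈ Finset.Ico n₀ n, ((mb (k + 1) : ℝ))⁻¹)
          + a ^ 2 * (∑ k ∈ Finset.Ico n₀ n, (((mb (k + 1) : ℝ))⁻¹) ^ 2) := by
      rw [Finset.mul_sum, Finset.mul_sum, ← Finset.sum_add_distrib]
      apply Finset.sum_congr rfl
      intro k _
      rw [hc_def]; ring
    have hsq : ∑ k ∈ Finset.Ico n₀ n, (((mb (k + 1) : ℝ))⁻¹) ^ 2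
        ≤ (∑ k ∈ Finset.Ico n₀ n, ((mb (k + 1) : ℝ))⁻¹) ^ 2 :=
      Finset.sum_sq_le_sq_sum_of_nonneg (fun k _ => by positivity)
    have hsq2' : (∑ k ∈ Finset.Ico n₀ n, ((mb (k + 1) : ℝ))⁻¹) ^ 2 ≤ γ ^ 2 := by
      apply pow_le_pow_left₀ (hPnn n) (hP n)
    rw [hsplit, hβ]
    nlinarith [hP n, mul_le_mul_of_nonneg_left (le_trans hsq hsq2') (sq_nonneg a),
      mul_le_mul_of_nonneg_left (hP n) ha0]
  -- induction : u n ≤ u n₀ * exp (S n)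
  have hind : ∀ n, n₀ ≤ n →
      e n + 1 ≤ (e n₀ + 1) * Real.exp (∑ k ∈ Finset.Ico n₀ n, c k) := by
    intro n hn
    induction n, hn using Nat.le_induction with
    | base => simp
    | succ n hn ih =>
      have h1 : e (n + 1) + 1 ≤ (1 + c n) * (e n + 1) := hu n
      have h2 : (1 + c n) * (e n + 1)
          ≤ Real.exp (c n) * ((e n₀ + 1) * Real.exp (∑ k ∈ Finset.Ico n₀ n, c k)) := by
        exact mul_le_mul (by linarith [Real.add_one_le_exp (c n)]) ih
          (by linarith [he0 n]) (Real.exp_nonneg _)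
      have h3 : Real.exp (c n) * ((e n₀ + 1) * Real.exp (∑ k ∈ Finset.Ico n₀ n, c k))
          = (e n₀ + 1) * Real.exp (∑ k ∈ Finset.Ico n₀ (n + 1), c k) := by
        rw [Finset.sum_Ico_succ_top hn, Real.exp_add]; ring
      linarith [h3 ▸ h2]
  -- conclude
  obtain ⟨hβ0, hβ1⟩ := hβ01
  have h1β : 0 < 1 - β := by linarith
  have hexp : Real.exp β ≤ 1 / (1 - β) := by
    have h1 : 1 - β ≤ Real.exp (-β) := by
      have := Real.add_one_le_exp (-β); linarith
    have h2 : Real.exp β = 1 / Real.exp (-β) := by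
      rw [Real.exp_neg]; field_simp
    rw [h2]
    apply one_div_le_one_div_of_le h1β h1
  have hfinal := hind N (by omega)
  have h4 : Real.exp (∑ k ∈ Finset.Ico n₀ N, c k) ≤ Real.exp β :=
    Real.exp_le_exp.2 (hS N)
  have h5 : (e n₀ + 1) * Real.exp (∑ k ∈ Finset.Ico n₀ N, c k)
      ≤ (e n₀ + 1) * (1 / (1 - β)) := by
    apply mul_le_mul_of_nonneg_left (le_trans h4 hexp) (by linarith [he0 n₀])
  have : e N ≤ (e n₀ + 1) / (1 - β) := by
    have := le_trans hfinal h5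
    rw [mul_one_div] at this
    linarith
  exact this
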